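/- Let F : ℝⁿ → ℝⁿ be twice continuously differentiable, and define G : ℝⁿ × ℝⁿ → ℝⁿ × ℝⁿ by G(x,v) = (F(v), (J(F)(v))ᵀ x). Then G is differentiable, and the Jacobian matrix of G at every point of ℝⁿ × ℝⁿ is a symmetric 2n×2n matrix. -/

import Mathlib

open Matrix

noncomputable section

/-- The Jacobian matrix J(F)(p) of a map F between real coordinate spaces. -/
def Jmat {ι κ : Type*} [Fintype ι] [Fintype κ] [DecidableEq ι]
    (F : (ι → ℝ) → (κ → ℝ)) (p : ι → ℝ) : Matrix κ ι ℝ :=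
  LinearMap.toMatrix' (fderiv ℝ F p : (ι → ℝ) →ₗ[ℝ] (κ → ℝ))

/-- for F : ℝⁿ → ℝⁿ twice continuously differentiable, the map
G(x,v) = (F(v), (J(F)(v))ᵀ x) is differentiable and its Jacobian matrix at every
point is a symmetric 2n×2n matrix.
(ℝⁿ × ℝⁿ is modelled as Fin n ⊕ Fin n → ℝ, with x = w ∘ Sum.inl and
v = w ∘ Sum.inr.) -/
theorem stmt11 (n : ℕ) (F : (Fin n → ℝ) → (Fin n → ℝ)) (hF : ContDiff ℝ 2 F)
    (G : (Fin n ⊕ Fin n → ℝ) → (Fin n ⊕ Fin n → ℝ))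
    (hG : ∀ w, G w = Sum.elim
      (F (w ∘ Sum.inr))
      ((Jmat F (w ∘ Sum.inr))ᵀ.mulVec (w ∘ Sum.inl))) :
    Differentiable ℝ G ∧ ∀ w, (Jmat G w).IsSymm := by
  classical
  have hFd : Differentiable ℝ F := hF.differentiable (by norm_num)
  have hf'c : ContDiff ℝ 1 (fderiv ℝ F) := hF.fderiv_right (by norm_num)
  have hf'd : Differentiable ℝ (fderiv ℝ F) := hf'c.differentiable (by norm_num)
  -- projection maps
  set R : (Fin n ⊕ Fin n → ℝ) →L[ℝ] (Fin n → ℝ) :=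
    ContinuousLinearMap.pi (fun i => ContinuousLinearMap.proj (Sum.inr i)) with hR
  have hRapp : ∀ w, R w = w ∘ Sum.inr := by intro w; ext i; simp [hR]
  -- rewrite G componentwise
  have hGfun : G = (fun w a => Sum.rec
      (fun i => F (R w) i)
      (fun i => ∑ j, fderiv ℝ F (R w) (Pi.single i 1) j * w (Sum.inl j)) a) := by
    funext w a
    rw [hG w, hRapp]
    cases a with
    | inl i => simp
    | inr i =>
      simp only [Sum.elim_inr, Matrix.mulVec, Matrix.transpose_apply, Jmat,
        LinearMap.toMatrix'_apply, dotProduct, ContinuousLinearMap.coe_coe,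
        Function.comp]
  -- derivative of each component
  have hcomp : ∀ (w : Fin n ⊕ Fin n → ℝ) (a : Fin n ⊕ Fin n),
      HasFDerivAt (fun w => Sum.rec
          (fun i => F (R w) i)
          (fun i => ∑ j, fderiv ℝ F (R w) (Pi.single i 1) j * w (Sum.inl j)) a)
        (Sum.rec
          (fun i => (ContinuousLinearMap.proj i).comp ((fderiv ℝ F (R w)).comp R))
          (fun i => ∑ j,
            ((fderiv ℝ F (R w) (Pi.single i 1) j) • (ContinuousLinearMap.proj (Sum.inl j) :
                (Fin n ⊕ Fin n → ℝ) →L[ℝ] ℝ)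
            + (w (Sum.inl j)) • ((ContinuousLinearMap.proj j).comp
                (((ContinuousLinearMap.apply ℝ (Fin n → ℝ) (Pi.single i 1)).comp
                  ((fderiv ℝ (fderiv ℝ F) (R w)).comp R)))))) a) w := by
    intro w a
    cases a with
    | inl i =>
      exact ((hasFDerivAt_apply i _).comp _ (((hFd (R w)).hasFDerivAt).comp w R.hasFDerivAt))
    | inr i =>
      refine HasFDerivAt.fun_sum fun j _ => ?_
      have hA : HasFDerivAt (fun w => fderiv ℝ F (R w))
          ((fderiv ℝ (fderiv ℝ F) (R w)).comp R) w :=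
        ((hf'd (R w)).hasFDerivAt).comp w R.hasFDerivAt
      have hB : HasFDerivAt (fun w => fderiv ℝ F (R w) (Pi.single i 1))
          ((ContinuousLinearMap.apply ℝ (Fin n → ℝ) (Pi.single i 1)).comp
            ((fderiv ℝ (fderiv ℝ F) (R w)).comp R)) w := by
        have := (ContinuousLinearMap.apply ℝ (Fin n → ℝ) (Pi.single i 1)).hasFDerivAt
          (x := fderiv ℝ F (R w))
        exact this.comp w hA
      have h1 : HasFDerivAt (fun w => fderiv ℝ F (R w) (Pi.single i 1) j)
          ((ContinuousLinearMap.proj j).comp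
            (((ContinuousLinearMap.apply ℝ (Fin n → ℝ) (Pi.single i 1)).comp
              ((fderiv ℝ (fderiv ℝ F) (R w)).comp R)))) w :=
        by have := (hasFDerivAt_apply (𝕜 := ℝ) j (fderiv ℝ F (R w) (Pi.single i 1))).comp w hB
           exact this
      have h2 : HasFDerivAt (fun w : Fin n ⊕ Fin n → ℝ => w (Sum.inl j))
          (ContinuousLinearMap.proj (Sum.inl j) : (Fin n ⊕ Fin n → ℝ) →L[ℝ] ℝ) w :=
        hasFDerivAt_apply (𝕜 := ℝ) (Sum.inl j) w
      exact h1.mul h2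
  -- full derivative
  have hder : ∀ w, HasFDerivAt G (ContinuousLinearMap.pi (fun a => Sum.rec
          (fun i => (ContinuousLinearMap.proj i).comp ((fderiv ℝ F (R w)).comp R))
          (fun i => ∑ j,
            ((fderiv ℝ F (R w) (Pi.single i 1) j) • (ContinuousLinearMap.proj (Sum.inl j) :
                (Fin n ⊕ Fin n → ℝ) →L[ℝ] ℝ)
            + (w (Sum.inl j)) • ((ContinuousLinearMap.proj j).comp
                (((ContinuousLinearMap.apply ℝ (Fin n → ℝ) (Pi.single i 1)).comp
                  ((fderiv ℝ (fderiv ℝ F) (R w)).comp R)))))) a)) w := by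
    intro w
    rw [hGfun]
    exact hasFDerivAt_pi.2 (fun a => hcomp w a)
  refine ⟨fun w => (hder w).differentiableAt, fun w => ?_⟩
  have hfd : fderiv ℝ G w = _ := (hder w).fderiv
  -- symmetry
  have hsymm : ∀ (a b : Fin n → ℝ), fderiv ℝ (fderiv ℝ F) (R w) a b
      = fderiv ℝ (fderiv ℝ F) (R w) b a :=
    fun a b => second_derivative_symmetric (fun y => (hFd y).hasFDerivAt)
      ((hf'd (R w)).hasFDerivAt) a b
  rw [Matrix.IsSymm]
  ext a b
  rw [Matrix.transpose_apply]
  have key : ∀ (c d : Fin n ⊕ Fin n), Jmat G w c d = fderiv ℝ G w (Pi.single d 1) c := by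
    intro c d
    simp only [Jmat, LinearMap.toMatrix'_apply, ContinuousLinearMap.coe_coe]
  rw [key, key, hfd]
  have hRsingle_l : ∀ j : Fin n, R (Pi.single (Sum.inl j) 1) = 0 := by
    intro j; ext i; simp [hR, Pi.single_apply]
  have hRsingle_r : ∀ j : Fin n, R (Pi.single (Sum.inr j) 1) = Pi.single j 1 := by
    intro j; ext i; simp [hR, Pi.single_apply, Sum.inr.injEq]
  cases a with
  | inl i =>
    cases b with
    | inl j =>
      simp [hRsingle_l]
    | inr j =>
      simp [hRsingle_l, hRsingle_r, Pi.single_apply, Finset.mul_sum]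
  | inr i =>
    cases b with
    | inl j =>
      simp [hRsingle_l, hRsingle_r, Pi.single_apply]
    | inr j =>
      simp only [ContinuousLinearMap.pi_apply, ContinuousLinearMap.sum_apply,
        ContinuousLinearMap.add_apply, ContinuousLinearMap.smul_apply,
        ContinuousLinearMap.comp_apply, ContinuousLinearMap.proj_apply,
        ContinuousLinearMap.apply_apply, hRsingle_r, Pi.single_apply]
      refine Finset.sum_congr rfl fun k _ => ?_
      simp [hsymm (Pi.single j 1) (Pi.single i 1), mul_comm]
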